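/- Fix a = 1/(2m − 1) with m a positive integer, and consider the strip-crossing recurrences with initial data a_0 = a, α_0 ∈ {0, 1}, and h_0 = ℓ·a where 2ℓ is a positive odd integer (so ℓ is a half-integer that is not an integer). Then the trajectory is periodic: for all n ∈ ℕ, a_n = a, α_n = α_0, and h_{n+2} = h_n. -/
import Mathlib


/-- One step of the strip-crossing recurrences: from the triple `(h_n, a_n, α_n)`
compute `γ_n = ⌊(1 − a_n)/a⌋`, `β_n = a·frac((1 − a_n)/a)`, and then
`h_{n+1} = −(h_n + (−1)^{α_n}·(a_n + (−1)^{γ_n+1}·β_n − (1 − (−1)^{γ_n})·a/2))`,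
`α_{n+1} = (α_n + γ_n + 1 + ⌊(2|h_{n+1}| + β_n)/a⌋) mod 2`,
`a_{n+1} = a·(1 − frac((2|h_{n+1}| + β_n)/a))`. -/
noncomputable def stripStep (a : ℝ) (s : ℝ × ℝ × ℤ) : ℝ × ℝ × ℤ :=
  let h := s.1
  let an := s.2.1
  let α := s.2.2
  let γ : ℤ := ⌊(1 - an) / a⌋
  let β : ℝ := a * Int.fract ((1 - an) / a)
  let h' : ℝ :=
    -(h + (-1 : ℝ) ^ α * (an + (-1 : ℝ) ^ (γ + 1) * β - (1 - (-1 : ℝ) ^ γ) * a / 2))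
  let α' : ℤ := (α + γ + 1 + ⌊(2 * |h'| + β) / a⌋) % 2
  let a' : ℝ := a * (1 - Int.fract ((2 * |h'| + β) / a))
  (h', a', α')

lemma stripStep_key (m : ℕ) (hm : 0 < m) (a : ℝ)
    (ha : a = 1 / (2 * (m : ℝ) - 1))
    (α : ℤ) (hα : α = 0 ∨ α = 1)
    (h : ℝ) (j : ℤ) (hj : Odd j) (hh : 2 * h = (j : ℝ) * a) :
    stripStep a (h, a, α) = (-(h + (-1 : ℝ) ^ α * a), a, α) := by
  have hm1 : (1 : ℝ) ≤ (m : ℝ) := by exact_mod_cast hm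
  have hden : (0 : ℝ) < 2 * (m : ℝ) - 1 := by linarith
  have ha0 : 0 < a := by rw [ha]; positivity
  have hane : a ≠ 0 := ne_of_gt ha0
  have hia : (1 - a) / a = ((2 * (m : ℤ) - 2 : ℤ) : ℝ) := by
    rw [sub_div, div_self hane, ha, one_div, inv_div]
    push_cast; ring
  have hγ : ⌊(1 - a) / a⌋ = 2 * (m : ℤ) - 2 := by rw [hia, Int.floor_intCast]
  have hβ : a * Int.fract ((1 - a) / a) = 0 := by
    rw [hia, Int.fract_intCast, mul_zero]
  have hev : Even (2 * (m : ℤ) - 2) := ⟨(m : ℤ) - 1, by ring⟩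
  have hpow : (-1 : ℝ) ^ (2 * (m : ℤ) - 2) = 1 := hev.neg_one_zpow
  obtain ⟨t, ht⟩ := hj
  rcases hα with rfl | rfl
  · -- α = 0, ε = 1
    have hq : 2 * |(-(h + (-1 : ℝ) ^ (0 : ℤ) * a))| / a = ((|j + 2| : ℤ) : ℝ) := by
      rw [zpow_zero, one_mul, abs_neg]
      have h2 : 2 * (h + a) = ((j : ℝ) + 2) * a := by linarith
      have h3 : 2 * |h + a| = |(j : ℝ) + 2| * a :=
        calc 2 * |h + a| = |2 * (h + a)| := by rw [abs_mul]; norm_num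
          _ = |((j : ℝ) + 2) * a| := by rw [h2]
          _ = |(j : ℝ) + 2| * a := by rw [abs_mul, abs_of_pos ha0]
      rw [h3, mul_div_assoc, div_self hane, mul_one]
      push_cast [abs_eq_abs]; left; rfl
    have hodd : ∃ s : ℤ, |j + 2| = 2 * s + 1 := by
      rcases abs_cases (j + 2) with ⟨h1, _⟩ | ⟨h1, _⟩
      · exact ⟨t + 1, by omega⟩
      · exact ⟨-t - 2, by omega⟩
    obtain ⟨s, hs⟩ := hodd
    simp only [stripStep, hγ, hβ, hpow, add_zero, sub_self, zero_mul, zero_div,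
      mul_zero, sub_zero, hq, Int.floor_intCast, Int.fract_intCast]
    refine Prod.ext rfl (Prod.ext (by ring) ?_)
    simp only
    rw [hs]; omega
  · -- α = 1, ε = -1
    have hq : 2 * |(-(h + (-1 : ℝ) ^ (1 : ℤ) * a))| / a = ((|j - 2| : ℤ) : ℝ) := by
      rw [zpow_one, abs_neg]
      have h2 : 2 * (h + -1 * a) = ((j : ℝ) - 2) * a := by linarith
      have h3 : 2 * |h + -1 * a| = |(j : ℝ) - 2| * a :=
        calc 2 * |h + -1 * a| = |2 * (h + -1 * a)| := by rw [abs_mul]; norm_num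
          _ = |((j : ℝ) - 2) * a| := by rw [h2]
          _ = |(j : ℝ) - 2| * a := by rw [abs_mul, abs_of_pos ha0]
      rw [h3, mul_div_assoc, div_self hane, mul_one]
      push_cast [abs_eq_abs]; left; rfl
    have hodd : ∃ s : ℤ, |j - 2| = 2 * s + 1 := by
      rcases abs_cases (j - 2) with ⟨h1, _⟩ | ⟨h1, _⟩
      · exact ⟨t - 1, by omega⟩
      · exact ⟨-t, by omega⟩
    obtain ⟨s, hs⟩ := hodd
    simp only [stripStep, hγ, hβ, hpow, add_zero, sub_self, zero_mul, zero_div,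
      mul_zero, sub_zero, hq, Int.floor_intCast, Int.fract_intCast]
    refine Prod.ext rfl (Prod.ext (by ring) ?_)
    simp only
    rw [hs]; omega

/-- For `a = 1/(2m − 1)` with `m` a positive integer and initial data `a₀ = a`,
`α₀ ∈ {0, 1}`, `h₀ = ℓ·a` with `2ℓ` a positive odd integer, the trajectory is
periodic: `a_n = a`, `α_n = α₀`, and `h_{n+2} = h_n` for all `n`. -/
theorem stripStep_periodic (m : ℕ) (hm : 0 < m) (a : ℝ)
    (ha : a = 1 / (2 * (m : ℝ) - 1))
    (α₀ : ℤ) (hα₀ : α₀ = 0 ∨ α₀ = 1)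
    (ℓ : ℝ) (hℓ : ∃ j : ℤ, 0 < j ∧ Odd j ∧ 2 * ℓ = (j : ℝ))
    (h₀ : ℝ) (hh₀ : h₀ = ℓ * a) :
    ∀ n : ℕ, ((stripStep a)^[n] (h₀, a, α₀)).2.1 = a ∧
      ((stripStep a)^[n] (h₀, a, α₀)).2.2 = α₀ ∧
      ((stripStep a)^[n + 2] (h₀, a, α₀)).1 = ((stripStep a)^[n] (h₀, a, α₀)).1 := by
  have main : ∀ n : ℕ, ∃ j : ℤ, Odd j ∧
      (stripStep a)^[n] (h₀, a, α₀) = ((j : ℝ) * a / 2, a, α₀) := by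
    intro n
    induction n with
    | zero =>
      obtain ⟨j, hj0, hjo, hj2⟩ := hℓ
      exact ⟨j, hjo, by
        simp only [Function.iterate_zero, id_eq]
        refine Prod.ext ?_ rfl
        simp only
        linear_combination hh₀ + (a / 2) * hj2⟩
    | succ n ih =>
      obtain ⟨j, hjo, hst⟩ := ih
      rw [Function.iterate_succ_apply', hst,
        stripStep_key m hm a ha α₀ hα₀ _ j hjo (by ring)]
      rcases hα₀ with rfl | rfl
      · refine ⟨-(j + 2), ?_, ?_⟩
        · obtain ⟨t, ht⟩ := hjo; exact ⟨-t - 2, by omega⟩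
        · refine Prod.ext ?_ rfl
          simp only [zpow_zero]
          push_cast; ring
      · refine ⟨-(j - 2), ?_, ?_⟩
        · obtain ⟨t, ht⟩ := hjo; exact ⟨-t, by omega⟩
        · refine Prod.ext ?_ rfl
          simp only [zpow_one]
          push_cast; ring
  intro n
  obtain ⟨j, hjo, hst⟩ := main n
  refine ⟨by rw [hst], by rw [hst], ?_⟩
  have h2 : n + 2 = (n + 1) + 1 := rfl
  rw [h2, Function.iterate_succ_apply', Function.iterate_succ_apply', hst,
    stripStep_key m hm a ha α₀ hα₀ _ j hjo (by ring)]
  rcases hα₀ with rfl | rfl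
  · rw [stripStep_key m hm a ha 0 (Or.inl rfl) _ (-(j + 2))
      (by obtain ⟨t, ht⟩ := hjo; exact ⟨-t - 2, by omega⟩)
      (by simp only [zpow_zero]; push_cast; ring)]
    simp only [zpow_zero]
    ring
  · rw [stripStep_key m hm a ha 1 (Or.inr rfl) _ (-(j - 2))
      (by obtain ⟨t, ht⟩ := hjo; exact ⟨-t, by omega⟩)
      (by simp only [zpow_one]; push_cast; ring)]
    simp only [zpow_one]
    ring
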